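/- (Hayashi's ID error bound) Let γ ∈ ℝ and for each input distribution P set T_P(γ) = {(x,y): log(W(y|x)/PW(y)) ≤ γ}. For any integer M, any (N, ε, δ)-identification code with N > |X|^M must satisfy ε + δ ≥ inf_P {1 − 2·(P × W)(T_P(γ)^c)} − √(e^γ / M). -/

import Mathlib

open scoped BigOperators Classical

section Aux
variable {X : Type*} [Fintype X]

private lemma sum_pi_prod (M : ℕ) (h : Fin M → X → ℝ) :
    ∑ f : Fin M → X, ∏ i, h i (f i) = ∏ i, ∑ x, h i x := by
  rw [Finset.prod_univ_sum, Fintype.piFinset_univ]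

private lemma marg1 {M : ℕ} {p : X → ℝ} (hp1 : ∑ x, p x = 1) (k : Fin M) (g : X → ℝ) :
    ∑ f : Fin M → X, (∏ i, p (f i)) * g (f k) = ∑ x, p x * g x := by
  have h1 : ∀ f : Fin M → X, (∏ i, p (f i)) * g (f k)
      = ∏ i, (p (f i) * if i = k then g (f i) else 1) := by
    intro f
    rw [Finset.prod_mul_distrib]
    congr 1
    simp [Finset.prod_ite_eq' Finset.univ k (fun i => g (f i))]
  simp_rw [h1]
  rw [sum_pi_prod M (fun i x => p x * if i = k then g x else 1)]
  have h2 : ∀ i : Fin M, (∑ x, (p x * if i = k then g x else 1))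
      = if i = k then ∑ x, p x * g x else 1 := by
    intro i; by_cases h : i = k <;> simp [h, hp1]
  simp_rw [h2]
  simp [Finset.prod_ite_eq' Finset.univ k (fun _ => ∑ x, p x * g x)]

private lemma marg2 {M : ℕ} {p : X → ℝ} (hp1 : ∑ x, p x = 1) {j k : Fin M} (hjk : j ≠ k)
    (g g' : X → ℝ) :
    ∑ f : Fin M → X, (∏ i, p (f i)) * (g (f j) * g' (f k))
      = (∑ x, p x * g x) * (∑ x, p x * g' x) := by
  have h1 : ∀ f : Fin M → X, (∏ i, p (f i)) * (g (f j) * g' (f k))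
      = ∏ i, (p (f i) * ((if i = j then g (f i) else 1) * (if i = k then g' (f i) else 1))) := by
    intro f
    rw [Finset.prod_mul_distrib, Finset.prod_mul_distrib]
    simp [Finset.prod_ite_eq' Finset.univ j (fun i => g (f i)),
      Finset.prod_ite_eq' Finset.univ k (fun i => g' (f i))]
  simp_rw [h1]
  rw [sum_pi_prod M (fun i x => p x * ((if i = j then g x else 1) * (if i = k then g' x else 1)))]
  have h2 : ∀ i : Fin M, (∑ x, p x * ((if i = j then g x else 1) * (if i = k then g' x else 1)))
      = (if i = j then ∑ x, p x * g x else 1) * (if i = k then ∑ x, p x * g' x else 1) := by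
    intro i
    by_cases hj : i = j
    · subst hj
      have : i ≠ k := hjk
      simp [this]
    · by_cases hk : i = k <;> simp [hj, hk, hp1, Ne.symm hjk]
  simp_rw [h2]
  rw [Finset.prod_mul_distrib]
  simp [Finset.prod_ite_eq' Finset.univ j (fun _ => ∑ x, p x * g x),
    Finset.prod_ite_eq' Finset.univ k (fun _ => ∑ x, p x * g' x)]

end Aux

private lemma tv_set {Y : Type*} [Fintype Y] (a b : Y → ℝ) (hab : ∑ y, a y = ∑ y, b y)
    (E : Finset Y) : ∑ y ∈ E, a y - ∑ y ∈ E, b y ≤ 2⁻¹ * ∑ y, |a y - b y| := by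
  have h1 : ∑ y ∈ E, (a y - b y) + ∑ y ∈ Eᶜ, (a y - b y) = 0 := by
    rw [Finset.sum_add_sum_compl]
    rw [Finset.sum_sub_distrib, hab]; ring
  have h2 : ∑ y ∈ E, (a y - b y) ≤ ∑ y ∈ E, |a y - b y| :=
    Finset.sum_le_sum fun y _ => le_abs_self _
  have h3 : -∑ y ∈ Eᶜ, (a y - b y) ≤ ∑ y ∈ Eᶜ, |a y - b y| := by
    rw [← Finset.sum_neg_distrib]
    exact Finset.sum_le_sum fun y _ => neg_le_abs _
  have h4 : ∑ y ∈ E, |a y - b y| + ∑ y ∈ Eᶜ, |a y - b y| = ∑ y, |a y - b y| :=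
    Finset.sum_add_sum_compl E _
  have h5 : ∑ y ∈ E, (a y - b y) = ∑ y ∈ E, a y - ∑ y ∈ E, b y := Finset.sum_sub_distrib _ _
  linarith

private lemma soft_covering {X Y : Type*} [Fintype X] [Fintype Y]
    (W : X → Y → ℝ) (hW0 : ∀ x y, 0 ≤ W x y) (hW1 : ∀ x, ∑ y, W x y = 1)
    (γ : ℝ) (M : ℕ) (hM : 0 < M)
    (p : X → ℝ) (hp0 : ∀ x, 0 ≤ p x) (hp1 : ∑ x, p x = 1) :
    ∃ f : Fin M → X,
      ∑ y, |(M : ℝ)⁻¹ * (∑ k, W (f k) y) - ∑ x, p x * W x y| ≤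
        2 * (∑ x, ∑ y, p x * W x y *
          (if γ < Real.log (W x y / ∑ x', p x' * W x' y) then 1 else 0))
        + Real.sqrt (Real.exp γ / M) := by
  have hMR : (0:ℝ) < M := by exact_mod_cast hM
  set pw : Y → ℝ := fun y => ∑ x, p x * W x y with hpw
  set V : X → Y → ℝ := fun x y => if γ < Real.log (W x y / pw y) then 0 else W x y with hV
  set μ : Y → ℝ := fun y => ∑ x, p x * V x y with hμ
  set w : (Fin M → X) → ℝ := fun f => ∏ i, p (f i) with hw
  set s : ℝ := Real.sqrt (Real.exp γ / M) with hs
  have hVnn : ∀ x y, 0 ≤ V x y := by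
    intro x y; simp only [hV]; split <;> [rfl; exact hW0 x y]
  have hVle : ∀ x y, V x y ≤ W x y := by
    intro x y; simp only [hV]; split <;> [exact hW0 x y; rfl]
  have hWV : ∀ x y, W x y * (if γ < Real.log (W x y / pw y) then 1 else 0)
      = W x y - V x y := by
    intro x y; simp only [hV]; split <;> ring
  have hpwnn : ∀ y, 0 ≤ pw y := fun y =>
    Finset.sum_nonneg fun x _ => mul_nonneg (hp0 x) (hW0 x y)
  have hμnn : ∀ y, 0 ≤ μ y := fun y =>
    Finset.sum_nonneg fun x _ => mul_nonneg (hp0 x) (hVnn x y)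
  have hμle : ∀ y, μ y ≤ pw y := fun y =>
    Finset.sum_le_sum fun x _ => mul_le_mul_of_nonneg_left (hVle x y) (hp0 x)
  have hwnn : ∀ f, 0 ≤ w f := fun f => Finset.prod_nonneg fun i _ => hp0 _
  have hwsum : ∑ f : Fin M → X, w f = 1 := by
    simp only [hw]
    rw [sum_pi_prod M (fun _ x => p x)]
    simp [hp1]
  have hpwsum : ∑ y, pw y = 1 := by
    simp only [hpw]
    rw [Finset.sum_comm]
    simp_rw [← Finset.mul_sum, hW1, mul_one, hp1]
  -- second moment bound (pointwise in y)
  have hsecond : ∀ y, ∑ x, p x * V x y ^ 2 ≤ Real.exp γ * pw y * μ y := by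
    intro y
    have h1 : ∑ x, p x * V x y ^ 2 ≤ ∑ x, Real.exp γ * pw y * (p x * V x y) := by
      apply Finset.sum_le_sum
      intro x _
      by_cases hT : γ < Real.log (W x y / pw y)
      · simp [hV, hT]
      · have hVW : V x y = W x y := by simp [hV, hT]
        by_cases hz : p x * W x y = 0
        · have : p x * V x y = 0 := by rw [hVW]; exact hz
          rw [hVW]
          rcases mul_eq_zero.1 hz with h | h
          · simp [h]
          · simp [h]
        · have hpx : 0 < p x := lt_of_le_of_ne (hp0 x) (by
            intro h; exact hz (by rw [← h]; ring))
          have hWxy : 0 < W x y := lt_of_le_of_ne (hW0 x y) (by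
            intro h; exact hz (by rw [← h]; ring))
          have hpwpos : 0 < pw y := lt_of_lt_of_le (mul_pos hpx hWxy)
            (Finset.single_le_sum (f := fun x => p x * W x y)
              (fun x _ => mul_nonneg (hp0 x) (hW0 x y)) (Finset.mem_univ x))
          have hratio : 0 < W x y / pw y := div_pos hWxy hpwpos
          have hlog : Real.log (W x y / pw y) ≤ γ := not_lt.mp hT
          have hle : W x y ≤ Real.exp γ * pw y := by
            have := (Real.log_le_iff_le_exp hratio).1 hlog
            rw [div_le_iff₀ hpwpos] at this
            linarith [this]
          rw [hVW]
          have e : p x * W x y ^ 2 = (p x * W x y) * W x y := by ring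
          rw [e]
          calc (p x * W x y) * W x y ≤ (p x * W x y) * (Real.exp γ * pw y) :=
                mul_le_mul_of_nonneg_left hle (mul_nonneg (hp0 x) (hW0 x y))
            _ = Real.exp γ * pw y * (p x * W x y) := by ring
    calc ∑ x, p x * V x y ^ 2 ≤ ∑ x, Real.exp γ * pw y * (p x * V x y) := h1
      _ = Real.exp γ * pw y * μ y := by rw [← Finset.mul_sum]
  -- variance bound
  have hvar : ∀ y, ∑ f : Fin M → X, w f * ((M:ℝ)⁻¹ * (∑ k, V (f k) y) - μ y) ^ 2
      ≤ Real.exp γ * pw y ^ 2 / M := by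
    intro y
    set Z : X → ℝ := fun x => V x y - μ y with hZ
    have hEZ : ∑ x, p x * Z x = 0 := by
      simp only [hZ, mul_sub, Finset.sum_sub_distrib, ← Finset.sum_mul, hp1, hμ]
      ring
    have hrw : ∀ f : Fin M → X,
        (M:ℝ)⁻¹ * (∑ k, V (f k) y) - μ y = (M:ℝ)⁻¹ * ∑ k, Z (f k) := by
      intro f
      simp only [hZ, Finset.sum_sub_distrib, Finset.sum_const, Finset.card_univ,
        Fintype.card_fin, nsmul_eq_mul, mul_sub, ← mul_assoc,
        inv_mul_cancel₀ (ne_of_gt hMR), one_mul]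
    have hexp : ∑ f : Fin M → X, w f * (∑ j, Z (f j)) ^ 2
        = (M:ℝ) * ∑ x, p x * Z x ^ 2 := by
      have h1 : ∀ f : Fin M → X, w f * (∑ j, Z (f j)) ^ 2
          = ∑ j, ∑ k, w f * (Z (f j) * Z (f k)) := by
        intro f
        rw [sq, Finset.sum_mul_sum]
        rw [Finset.mul_sum]
        congr 1; ext j
        rw [Finset.mul_sum]
      simp_rw [h1]
      rw [Finset.sum_comm]
      have h2 : ∀ j : Fin M, ∑ f : Fin M → X, ∑ k, w f * (Z (f j) * Z (f k))
          = ∑ k, ∑ f : Fin M → X, w f * (Z (f j) * Z (f k)) := fun j => Finset.sum_comm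
      simp_rw [h2]
      have h3 : ∀ j k : Fin M, ∑ f : Fin M → X, w f * (Z (f j) * Z (f k))
          = if j = k then ∑ x, p x * Z x ^ 2 else 0 := by
        intro j k
        by_cases hjk : j = k
        · subst hjk
          rw [if_pos rfl]
          have h := marg1 (M := M) hp1 j (fun x => Z x ^ 2)
          simp only [hw]
          rw [← h]
          apply Finset.sum_congr rfl
          intro f _
          ring
        · rw [if_neg hjk]
          have h := marg2 (M := M) hp1 hjk Z Z
          simp only [hw]
          rw [h, hEZ, mul_zero]
      simp_rw [h3]
      simp [Finset.sum_ite_eq, Finset.mul_sum]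
    have hvarle : ∑ x, p x * Z x ^ 2 ≤ Real.exp γ * pw y ^ 2 := by
      have e1 : ∑ x, p x * Z x ^ 2 = (∑ x, p x * V x y ^ 2) - μ y ^ 2 := by
        have expand : ∀ x, p x * Z x ^ 2
            = p x * V x y ^ 2 - 2 * μ y * (p x * V x y) + μ y ^ 2 * p x := by
          intro x; simp only [hZ]; ring
        rw [Finset.sum_congr rfl (fun x _ => expand x)]
        rw [Finset.sum_add_distrib, Finset.sum_sub_distrib, ← Finset.mul_sum,
          ← Finset.mul_sum, hp1]
        simp only [hμ]
        ring
      calc ∑ x, p x * Z x ^ 2 = (∑ x, p x * V x y ^ 2) - μ y ^ 2 := e1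
        _ ≤ ∑ x, p x * V x y ^ 2 := by nlinarith [sq_nonneg (μ y)]
        _ ≤ Real.exp γ * pw y * μ y := hsecond y
        _ ≤ Real.exp γ * pw y * pw y :=
            mul_le_mul_of_nonneg_left (hμle y) (mul_nonneg (Real.exp_pos γ).le (hpwnn y))
        _ = Real.exp γ * pw y ^ 2 := by ring
    calc ∑ f : Fin M → X, w f * ((M:ℝ)⁻¹ * (∑ k, V (f k) y) - μ y) ^ 2
        = ∑ f : Fin M → X, w f * ((M:ℝ)⁻¹ ^ 2 * (∑ j, Z (f j)) ^ 2) := by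
          apply Finset.sum_congr rfl; intro f _; rw [hrw f]; ring
      _ = (M:ℝ)⁻¹ ^ 2 * ∑ f : Fin M → X, w f * (∑ j, Z (f j)) ^ 2 := by
          rw [Finset.mul_sum]; apply Finset.sum_congr rfl; intro f _; ring
      _ = (M:ℝ)⁻¹ ^ 2 * ((M:ℝ) * ∑ x, p x * Z x ^ 2) := by rw [hexp]
      _ = (∑ x, p x * Z x ^ 2) / M := by field_simp
      _ ≤ Real.exp γ * pw y ^ 2 / M := by
          apply div_le_div_of_nonneg_right hvarle hMR.le
  -- mean absolute deviation bound
  have hEdev : ∀ y, ∑ f : Fin M → X, w f * |(M:ℝ)⁻¹ * (∑ k, V (f k) y) - μ y| ≤ pw y * s := by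
    intro y
    set A : (Fin M → X) → ℝ := fun f => (M:ℝ)⁻¹ * (∑ k, V (f k) y) - μ y with hA
    have hsumnn : 0 ≤ ∑ f : Fin M → X, w f * |A f| :=
      Finset.sum_nonneg fun f _ => mul_nonneg (hwnn f) (abs_nonneg _)
    have hcs : (∑ f : Fin M → X, w f * |A f|) ^ 2 ≤ ∑ f : Fin M → X, w f * (A f) ^ 2 := by
      have h := Finset.sum_mul_sq_le_sq_mul_sq Finset.univ
        (fun f : Fin M → X => Real.sqrt (w f)) (fun f => Real.sqrt (w f) * |A f|)
      have e1 : ∀ f : Fin M → X, Real.sqrt (w f) * (Real.sqrt (w f) * |A f|) = w f * |A f| := by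
        intro f; rw [← mul_assoc, Real.mul_self_sqrt (hwnn f)]
      have e2 : ∀ f : Fin M → X, Real.sqrt (w f) ^ 2 = w f := fun f => Real.sq_sqrt (hwnn f)
      have e3 : ∀ f : Fin M → X, (Real.sqrt (w f) * |A f|) ^ 2 = w f * A f ^ 2 := by
        intro f; rw [mul_pow, Real.sq_sqrt (hwnn f), sq_abs]
      simp_rw [e1, e2, e3] at h
      rw [hwsum, one_mul] at h
      exact h
    have h2 : (∑ f : Fin M → X, w f * |A f|) ^ 2 ≤ Real.exp γ * pw y ^ 2 / M :=
      le_trans hcs (hvar y)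
    have h3 : ∑ f : Fin M → X, w f * |A f| ≤ Real.sqrt (Real.exp γ * pw y ^ 2 / M) :=
      (Real.le_sqrt hsumnn (by positivity)).2 h2
    calc ∑ f : Fin M → X, w f * |A f| ≤ Real.sqrt (Real.exp γ * pw y ^ 2 / M) := h3
      _ = pw y * s := by
          rw [hs, show Real.exp γ * pw y ^ 2 / M = pw y ^ 2 * (Real.exp γ / M) by ring,
            Real.sqrt_mul (sq_nonneg _), Real.sqrt_sq (hpwnn y)]
  -- tail expectation
  have htail : ∀ y, ∑ f : Fin M → X, w f * ((M:ℝ)⁻¹ * ∑ k, (W (f k) y - V (f k) y))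
      = pw y - μ y := by
    intro y
    have e : ∑ f : Fin M → X, w f * ((M:ℝ)⁻¹ * ∑ k, (W (f k) y - V (f k) y))
        = (M:ℝ)⁻¹ * ∑ k : Fin M, ∑ f : Fin M → X, w f * (W (f k) y - V (f k) y) := by
      simp only [Finset.mul_sum]
      rw [Finset.sum_comm]
      exact Finset.sum_congr rfl fun k _ => Finset.sum_congr rfl fun f _ => by ring
    rw [e]
    have e2 : ∀ k : Fin M, ∑ f : Fin M → X, w f * (W (f k) y - V (f k) y)
        = pw y - μ y := by
      intro k
      have h := marg1 (M := M) hp1 k (fun x => W x y - V x y)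
      simp only [hw]
      rw [h]
      simp only [hpw, hμ, mul_sub, Finset.sum_sub_distrib]
    simp_rw [e2]
    rw [Finset.sum_const, Finset.card_univ, Fintype.card_fin, nsmul_eq_mul, ← mul_assoc,
      inv_mul_cancel₀ (ne_of_gt hMR), one_mul]
  -- identify statement tail with pw - μ
  have htt : (∑ x, ∑ y, p x * W x y * (if γ < Real.log (W x y / pw y) then 1 else 0))
      = ∑ y, (pw y - μ y) := by
    have e : ∀ x y, p x * W x y * (if γ < Real.log (W x y / pw y) then 1 else 0)
        = p x * W x y - p x * V x y := by
      intro x y; rw [mul_assoc, hWV]; ring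
    simp_rw [e]
    rw [Finset.sum_comm]
    simp only [hpw, hμ, Finset.sum_sub_distrib]
  -- pointwise bound on the total variation
  have hG : ∀ f : Fin M → X, ∑ y, |(M:ℝ)⁻¹ * (∑ k, W (f k) y) - pw y|
      ≤ (∑ y, (M:ℝ)⁻¹ * ∑ k, (W (f k) y - V (f k) y))
        + (∑ y, |(M:ℝ)⁻¹ * (∑ k, V (f k) y) - μ y|)
        + ∑ y, (pw y - μ y) := by
    intro f
    rw [← Finset.sum_add_distrib, ← Finset.sum_add_distrib]
    apply Finset.sum_le_sum
    intro y _
    have e : (M:ℝ)⁻¹ * (∑ k, W (f k) y) - pw y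
        = ((M:ℝ)⁻¹ * ∑ k, (W (f k) y - V (f k) y))
          + ((M:ℝ)⁻¹ * (∑ k, V (f k) y) - μ y) + (μ y - pw y) := by
      rw [Finset.sum_sub_distrib]; ring
    rw [e]
    have h1 := abs_add_le (((M:ℝ)⁻¹ * ∑ k, (W (f k) y - V (f k) y))
        + ((M:ℝ)⁻¹ * (∑ k, V (f k) y) - μ y)) (μ y - pw y)
    have h2 := abs_add_le ((M:ℝ)⁻¹ * ∑ k, (W (f k) y - V (f k) y))
        ((M:ℝ)⁻¹ * (∑ k, V (f k) y) - μ y)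
    have h3 : |(M:ℝ)⁻¹ * ∑ k, (W (f k) y - V (f k) y)|
        = (M:ℝ)⁻¹ * ∑ k, (W (f k) y - V (f k) y) := by
      rw [abs_of_nonneg]
      exact mul_nonneg (by positivity)
        (Finset.sum_nonneg fun k _ => sub_nonneg.2 (hVle (f k) y))
    have h4 : |μ y - pw y| = pw y - μ y := by
      rw [abs_of_nonpos (by linarith [hμle y])]; ring
    linarith
  -- expectation of the bound
  have hEG : ∑ f : Fin M → X, w f * (∑ y, |(M:ℝ)⁻¹ * (∑ k, W (f k) y) - pw y|)
      ≤ 2 * (∑ x, ∑ y, p x * W x y * (if γ < Real.log (W x y / pw y) then 1 else 0)) + s := by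
    have step1 : ∑ f : Fin M → X, w f * (∑ y, |(M:ℝ)⁻¹ * (∑ k, W (f k) y) - pw y|)
        ≤ ∑ f : Fin M → X, w f * ((∑ y, (M:ℝ)⁻¹ * ∑ k, (W (f k) y - V (f k) y))
          + (∑ y, |(M:ℝ)⁻¹ * (∑ k, V (f k) y) - μ y|) + ∑ y, (pw y - μ y)) :=
      Finset.sum_le_sum fun f _ => mul_le_mul_of_nonneg_left (hG f) (hwnn f)
    have step2 : ∑ f : Fin M → X, w f * ((∑ y, (M:ℝ)⁻¹ * ∑ k, (W (f k) y - V (f k) y))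
          + (∑ y, |(M:ℝ)⁻¹ * (∑ k, V (f k) y) - μ y|) + ∑ y, (pw y - μ y))
        = (∑ f : Fin M → X, w f * ∑ y, (M:ℝ)⁻¹ * ∑ k, (W (f k) y - V (f k) y))
          + (∑ f : Fin M → X, w f * ∑ y, |(M:ℝ)⁻¹ * (∑ k, V (f k) y) - μ y|)
          + (∑ f : Fin M → X, w f * ∑ y, (pw y - μ y)) := by
      rw [← Finset.sum_add_distrib, ← Finset.sum_add_distrib]
      exact Finset.sum_congr rfl fun f _ => by ring
    have part1 : ∑ f : Fin M → X, w f * ∑ y, (M:ℝ)⁻¹ * ∑ k, (W (f k) y - V (f k) y)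
        = ∑ y, (pw y - μ y) := by
      have e : ∑ f : Fin M → X, w f * ∑ y, (M:ℝ)⁻¹ * ∑ k, (W (f k) y - V (f k) y)
          = ∑ y, ∑ f : Fin M → X, w f * ((M:ℝ)⁻¹ * ∑ k, (W (f k) y - V (f k) y)) := by
        simp only [Finset.mul_sum]
        exact Finset.sum_comm
      rw [e]
      exact Finset.sum_congr rfl fun y _ => htail y
    have part2 : ∑ f : Fin M → X, w f * ∑ y, |(M:ℝ)⁻¹ * (∑ k, V (f k) y) - μ y| ≤ s := by
      have e : ∑ f : Fin M → X, w f * ∑ y, |(M:ℝ)⁻¹ * (∑ k, V (f k) y) - μ y|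
          = ∑ y, ∑ f : Fin M → X, w f * |(M:ℝ)⁻¹ * (∑ k, V (f k) y) - μ y| := by
        simp only [Finset.mul_sum]
        exact Finset.sum_comm
      rw [e]
      calc ∑ y, ∑ f : Fin M → X, w f * |(M:ℝ)⁻¹ * (∑ k, V (f k) y) - μ y|
          ≤ ∑ y, pw y * s := Finset.sum_le_sum fun y _ => hEdev y
        _ = s := by rw [← Finset.sum_mul, hpwsum, one_mul]
    have part3 : ∑ f : Fin M → X, w f * ∑ y, (pw y - μ y) = ∑ y, (pw y - μ y) := by
      rw [← Finset.sum_mul, hwsum, one_mul]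
    rw [htt]
    calc ∑ f : Fin M → X, w f * (∑ y, |(M:ℝ)⁻¹ * (∑ k, W (f k) y) - pw y|)
        ≤ _ := step1
      _ = _ := step2
      _ ≤ (∑ y, (pw y - μ y)) + s + (∑ y, (pw y - μ y)) := by
          rw [part1, part3]; linarith [part2]
      _ = 2 * (∑ y, (pw y - μ y)) + s := by ring
  -- existence
  by_contra hcon
  push_neg at hcon
  have hpos : ∃ f : Fin M → X, 0 < w f := by
    by_contra hnone
    push_neg at hnone
    have : ∑ f : Fin M → X, w f ≤ 0 := Finset.sum_nonpos fun f _ => hnone f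
    rw [hwsum] at this; linarith
  obtain ⟨f0, hf0⟩ := hpos
  set B : ℝ := 2 * (∑ x, ∑ y, p x * W x y * (if γ < Real.log (W x y / pw y) then 1 else 0)) + s
    with hB
  have hlt : ∑ f : Fin M → X, w f * B < ∑ f : Fin M → X,
      w f * (∑ y, |(M:ℝ)⁻¹ * (∑ k, W (f k) y) - pw y|) := by
    apply Finset.sum_lt_sum
    · intro f _
      exact mul_le_mul_of_nonneg_left (le_of_lt (hcon f)) (hwnn f)
    · exact ⟨f0, Finset.mem_univ f0, mul_lt_mul_of_pos_left (hcon f0) hf0⟩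
  rw [← Finset.sum_mul, hwsum, one_mul] at hlt
  exact absurd (lt_of_lt_of_le hlt hEG) (lt_irrefl B)

/-- Hayashi's ID error bound: with `T_P(γ) = {(x,y) : log(W(y|x)/PW(y)) ≤ γ}`,
any `(N, ε, δ)`-identification code with `N > |X|^M` satisfies
`ε + δ ≥ inf_P {1 − 2(P × W)(T_P(γ)ᶜ)} − √(e^γ/M)`. -/
theorem hayashi_id_error_bound {X Y : Type*} [Fintype X] [Fintype Y]
    [Nonempty X] [Nonempty Y]
    (W : X → Y → ℝ) (hW0 : ∀ x y, 0 ≤ W x y) (hW1 : ∀ x, ∑ y, W x y = 1)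
    (γ : ℝ) (M : ℕ) (hM : 0 < M)
    (N : ℕ) (hN : Fintype.card X ^ M < N)
    (ε δ : ℝ)
    (P : Fin N → X → ℝ) (hP0 : ∀ i x, 0 ≤ P i x) (hP1 : ∀ i, ∑ x, P i x = 1)
    (D : Fin N → Finset Y)
    (hTypeI : ∀ i, 1 - ε ≤ ∑ y ∈ D i, ∑ x, P i x * W x y)
    (hTypeII : ∀ i j, i ≠ j → ∑ y ∈ D i, ∑ x, P j x * W x y ≤ δ) :
    (⨅ Q : {p : X → ℝ // (∀ x, 0 ≤ p x) ∧ ∑ x, p x = 1},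
        (1 - 2 * ∑ x, ∑ y, Q.1 x * W x y *
          (if γ < Real.log (W x y / ∑ x', Q.1 x' * W x' y) then 1 else 0)))
      - Real.sqrt (Real.exp γ / M) ≤ ε + δ := by
  have hMR : (0:ℝ) < M := by exact_mod_cast hM
  choose F hF using fun i => soft_covering W hW0 hW1 γ M hM (P i) (hP0 i) (hP1 i)
  have hcard : Fintype.card (Fin M → X) < Fintype.card (Fin N) := by
    rw [Fintype.card_fun, Fintype.card_fin, Fintype.card_fin]
    exact hN
  obtain ⟨i, j, hij, hFij⟩ := Fintype.exists_ne_map_eq_of_card_lt F hcard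
  have hQi := hF i
  have hQj := hF j
  rw [← hFij] at hQj
  have hI := hTypeI i
  have hII := hTypeII i j hij
  -- total masses
  have hqw1 : ∑ y, ((M:ℝ)⁻¹ * (∑ k, W (F i k) y)) = 1 := by
    simp_rw [← Finset.mul_sum]
    rw [Finset.sum_comm]
    simp_rw [hW1]
    rw [Finset.sum_const, Finset.card_univ, Fintype.card_fin, nsmul_eq_mul, mul_one,
      inv_mul_cancel₀ (ne_of_gt hMR)]
  have hpw1 : ∀ l : Fin N, ∑ y, ∑ x, P l x * W x y = 1 := by
    intro l
    rw [Finset.sum_comm]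
    simp_rw [← Finset.mul_sum, hW1, mul_one]
    exact hP1 l
  -- abbreviations for the two tail masses
  set ti : ℝ := ∑ x, ∑ y, P i x * W x y *
    (if γ < Real.log (W x y / ∑ x', P i x' * W x' y) then 1 else 0) with hti
  set tj : ℝ := ∑ x, ∑ y, P j x * W x y *
    (if γ < Real.log (W x y / ∑ x', P j x' * W x' y) then 1 else 0) with htj
  set s : ℝ := Real.sqrt (Real.exp γ / M) with hs
  -- triangle inequality via the common approximation
  have h1 : ∑ y ∈ D i, (∑ x, P i x * W x y) - ∑ y ∈ D i, ((M:ℝ)⁻¹ * (∑ k, W (F i k) y))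
      ≤ 2⁻¹ * ∑ y, |(∑ x, P i x * W x y) - (M:ℝ)⁻¹ * (∑ k, W (F i k) y)| :=
    tv_set (fun y => ∑ x, P i x * W x y) (fun y => (M:ℝ)⁻¹ * (∑ k, W (F i k) y))
      (by rw [hpw1 i, hqw1]) (D i)
  have h2 : ∑ y ∈ D i, ((M:ℝ)⁻¹ * (∑ k, W (F i k) y)) - ∑ y ∈ D i, (∑ x, P j x * W x y)
      ≤ 2⁻¹ * ∑ y, |(M:ℝ)⁻¹ * (∑ k, W (F i k) y) - ∑ x, P j x * W x y| :=
    tv_set (fun y => (M:ℝ)⁻¹ * (∑ k, W (F i k) y)) (fun y => ∑ x, P j x * W x y)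
      (by rw [hqw1, hpw1 j]) (D i)
  have e1 : ∑ y, |(∑ x, P i x * W x y) - (M:ℝ)⁻¹ * (∑ k, W (F i k) y)| ≤ 2 * ti + s := by
    calc ∑ y, |(∑ x, P i x * W x y) - (M:ℝ)⁻¹ * (∑ k, W (F i k) y)|
        = ∑ y, |(M:ℝ)⁻¹ * (∑ k, W (F i k) y) - ∑ x, P i x * W x y| :=
          Finset.sum_congr rfl fun y _ => abs_sub_comm _ _
      _ ≤ 2 * ti + s := hQi
  have e2 : ∑ y, |(M:ℝ)⁻¹ * (∑ k, W (F i k) y) - ∑ x, P j x * W x y| ≤ 2 * tj + s := hQj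
  have key : 1 - ε - δ ≤ ti + tj + s := by linarith
  -- bounding the infimum
  have hbdd : BddBelow (Set.range (fun Q : {p : X → ℝ // (∀ x, 0 ≤ p x) ∧ ∑ x, p x = 1} =>
      (1 - 2 * ∑ x, ∑ y, Q.1 x * W x y *
        (if γ < Real.log (W x y / ∑ x', Q.1 x' * W x' y) then 1 else 0)))) := by
    refine ⟨-1, ?_⟩
    rintro v ⟨Q, rfl⟩
    have hle1 : ∑ x, ∑ y, Q.1 x * W x y *
        (if γ < Real.log (W x y / ∑ x', Q.1 x' * W x' y) then 1 else 0) ≤ 1 := by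
      calc ∑ x, ∑ y, Q.1 x * W x y *
            (if γ < Real.log (W x y / ∑ x', Q.1 x' * W x' y) then 1 else 0)
          ≤ ∑ x, ∑ y, Q.1 x * W x y := by
            apply Finset.sum_le_sum; intro x _
            apply Finset.sum_le_sum; intro y _
            have hnn : 0 ≤ Q.1 x * W x y := mul_nonneg (Q.2.1 x) (hW0 x y)
            by_cases h : γ < Real.log (W x y / ∑ x', Q.1 x' * W x' y) <;> simp [h, hnn]
        _ = 1 := by simp_rw [← Finset.mul_sum, hW1, mul_one]; exact Q.2.2
    simp only
    linarith
  have hinf1 : (⨅ Q : {p : X → ℝ // (∀ x, 0 ≤ p x) ∧ ∑ x, p x = 1},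
        (1 - 2 * ∑ x, ∑ y, Q.1 x * W x y *
          (if γ < Real.log (W x y / ∑ x', Q.1 x' * W x' y) then 1 else 0)))
      ≤ 1 - 2 * ti := ciInf_le hbdd ⟨P i, hP0 i, hP1 i⟩
  have hinf2 : (⨅ Q : {p : X → ℝ // (∀ x, 0 ≤ p x) ∧ ∑ x, p x = 1},
        (1 - 2 * ∑ x, ∑ y, Q.1 x * W x y *
          (if γ < Real.log (W x y / ∑ x', Q.1 x' * W x' y) then 1 else 0)))
      ≤ 1 - 2 * tj := ciInf_le hbdd ⟨P j, hP0 j, hP1 j⟩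
  rcases le_total ti tj with h | h
  · linarith
  · linarith
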